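/- Let $L_b$ be a nonnegative random variable with $\mathbb{P}(L_b>u)=\mathbb{E}[1-\sqrt{(b-Z_u)^+/b}]$ where, for each $u>0$, the law of $Z_u$ satisfies $\mathbb{E}\big[\int_0^\infty f(Z_t)\,\mathrm{d}t\big]=\sqrt{\frac{3}{2\pi}}\int_0^\infty \frac{f(y)}{\sqrt{y}(1+y)}\,\mathrm{d}y$ for all measurable $f\geq 0$ with $f(0)=0$. Then $\mathbb{E}[L_b]=\sqrt{\frac{3}{2\pi}}\int_0^\infty\Big(1-\sqrt{\frac{(b-y)^+}{b}}\Big)\frac{\mathrm{d}y}{\sqrt{y}(1+y)} = \sqrt{\frac{3\pi}{2}}\Big(1-\frac{\sqrt{1+b}-1}{\sqrt{b}}\Big)$. -/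

import Mathlib

open MeasureTheory Set Real


lemma integrable_inv_csq_add_sq {c : ℝ} (hc : 0 < c) :
    Integrable (fun x : ℝ => (c ^ 2 + x ^ 2)⁻¹) := by
  have h := (integrable_inv_one_add_sq.comp_div (R := c) hc.ne').const_mul ((c ^ 2)⁻¹)
  refine h.congr (Filter.Eventually.of_forall fun x => ?_)
  have h1 : (0:ℝ) < c ^ 2 + x ^ 2 := by positivity
  field_simp

lemma integral_Ioi_inv_csq_add_sq {c : ℝ} (hc : 0 < c) :
    ∫ x in Ioi (0 : ℝ), (c ^ 2 + x ^ 2)⁻¹ = π / (2 * c) := by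
  have hderiv : ∀ x ∈ Ici (0 : ℝ),
      HasDerivAt (fun x : ℝ => c⁻¹ * arctan (x / c)) ((c ^ 2 + x ^ 2)⁻¹) x := by
    intro x _
    have h1 : HasDerivAt (fun x : ℝ => arctan (x / c))
        (1 / (1 + (x / c) ^ 2) * (1 / c)) x := by
      have h := (Real.hasDerivAt_arctan (x / c)).comp x ((hasDerivAt_id' x).div_const c)
      exact h
    have h2 : HasDerivAt (fun x : ℝ => c⁻¹ * arctan (x / c))
        (c⁻¹ * (1 / (1 + (x / c) ^ 2) * (1 / c))) x := h1.const_mul c⁻¹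
    convert h2 using 1
    have h1 : (0:ℝ) < c ^ 2 + x ^ 2 := by positivity
    field_simp
  have htend : Filter.Tendsto (fun x : ℝ => c⁻¹ * arctan (x / c)) Filter.atTop
      (nhds (c⁻¹ * (π / 2))) :=
    ((tendsto_nhds_of_tendsto_nhdsWithin tendsto_arctan_atTop).comp
      (Filter.tendsto_id.atTop_div_const hc)).const_mul c⁻¹
  have := integral_Ioi_of_hasDerivAt_of_tendsto' hderiv
    ((integrable_inv_csq_add_sq hc).integrableOn) htend
  rw [this]
  simp
  ring

lemma pf_eq {c : ℝ} (hc : 1 < c) :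
    (fun x : ℝ => x ^ 2 / ((c ^ 2 + x ^ 2) * (1 + x ^ 2)))
      = fun x : ℝ => (c ^ 2 - 1)⁻¹ * (c ^ 2 * (c ^ 2 + x ^ 2)⁻¹ - (1 + x ^ 2)⁻¹) := by
  funext x
  have h1 : (0:ℝ) < c ^ 2 + x ^ 2 := by positivity
  have h2 : (0:ℝ) < 1 + x ^ 2 := by positivity
  have h3 : c ^ 2 - 1 ≠ 0 := by nlinarith
  field_simp
  ring

lemma integrable_ratfn {c : ℝ} (hc : 1 < c) :
    Integrable (fun x : ℝ => x ^ 2 / ((c ^ 2 + x ^ 2) * (1 + x ^ 2))) := by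
  rw [pf_eq hc]
  exact (((integrable_inv_csq_add_sq (lt_trans one_pos hc)).const_mul _).sub
    integrable_inv_one_add_sq).const_mul _

lemma integral_ratfn {c : ℝ} (hc : 1 < c) :
    ∫ x in Ioi (0 : ℝ), x ^ 2 / ((c ^ 2 + x ^ 2) * (1 + x ^ 2)) = π / (2 * (c + 1)) := by
  have hc0 : 0 < c := lt_trans one_pos hc
  rw [pf_eq hc]
  rw [MeasureTheory.integral_const_mul]
  rw [integral_sub (((integrable_inv_csq_add_sq hc0).integrableOn).const_mul _)
    (integrable_inv_one_add_sq.integrableOn)]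
  rw [MeasureTheory.integral_const_mul, integral_Ioi_inv_csq_add_sq hc0, integral_Ioi_inv_one_add_sq]
  have h3 : c ^ 2 - 1 ≠ 0 := by nlinarith
  have h4 : c + 1 ≠ 0 := by nlinarith
  field_simp
  simp only [Real.arctan_zero]
  ring


lemma sq_image_Ioi : (fun x : ℝ => x ^ 2) '' Ioi (0:ℝ) = Ioi (0:ℝ) := by
  ext y
  constructor
  · rintro ⟨x, hx, rfl⟩
    exact pow_pos (mem_Ioi.1 hx) 2
  · intro hy
    exact ⟨Real.sqrt y, Real.sqrt_pos.2 hy, Real.sq_sqrt (le_of_lt hy)⟩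

lemma sq_injOn_Ioi : InjOn (fun x : ℝ => x ^ 2) (Ioi (0:ℝ)) := by
  intro p hp q hq h
  simp only [mem_Ioi] at hp hq
  simp only at h
  nlinarith [sq_nonneg (p - q), sq_nonneg (p + q)]

lemma sq_hasDeriv : ∀ x ∈ Ioi (0:ℝ),
    HasDerivWithinAt (fun x : ℝ => x ^ 2) (2 * x) (Ioi (0:ℝ)) x := by
  intro x _
  simpa using (hasDerivAt_pow 2 x).hasDerivWithinAt

lemma I_aux :
    (∫ y in Ioi (0:ℝ), 1 / (Real.sqrt y * (1 + y)))
      = ∫ x in Ioi (0:ℝ), 2 * (1 + x ^ 2)⁻¹ := by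
  have h := integral_image_eq_integral_abs_deriv_smul measurableSet_Ioi sq_hasDeriv
    sq_injOn_Ioi (fun y => 1 / (Real.sqrt y * (1 + y)))
  rw [sq_image_Ioi] at h
  rw [h]
  apply setIntegral_congr_fun measurableSet_Ioi
  intro x hx
  simp only [mem_Ioi] at hx
  have h1 : Real.sqrt (x ^ 2) = x := Real.sqrt_sq hx.le
  have h2 : (0:ℝ) < 1 + x ^ 2 := by positivity
  show |2 * x| • (1 / (Real.sqrt (x ^ 2) * (1 + x ^ 2))) = 2 * (1 + x ^ 2)⁻¹
  rw [smul_eq_mul, h1, abs_of_pos (by linarith : (0:ℝ) < 2 * x)]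
  field_simp

lemma I_val : (∫ y in Ioi (0:ℝ), 1 / (Real.sqrt y * (1 + y))) = π := by
  rw [I_aux, MeasureTheory.integral_const_mul, integral_Ioi_inv_one_add_sq]
  simp only [Real.arctan_zero, sub_zero]
  ring

lemma I_integrable : IntegrableOn (fun y => 1 / (Real.sqrt y * (1 + y))) (Ioi (0:ℝ)) := by
  have h := (integrableOn_image_iff_integrableOn_abs_deriv_smul measurableSet_Ioi
    sq_hasDeriv sq_injOn_Ioi (fun y => 1 / (Real.sqrt y * (1 + y))))
  rw [sq_image_Ioi] at h
  rw [h]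
  refine ((integrable_inv_one_add_sq.const_mul 2).integrableOn).congr_fun ?_ measurableSet_Ioi
  intro x hx
  simp only [mem_Ioi] at hx
  have h1 : Real.sqrt (x ^ 2) = x := Real.sqrt_sq hx.le
  have h2 : (0:ℝ) < 1 + x ^ 2 := by positivity
  show 2 * (1 + x ^ 2)⁻¹ = |2 * x| • (1 / (Real.sqrt (x ^ 2) * (1 + x ^ 2)))
  rw [smul_eq_mul, h1, abs_of_pos (by linarith : (0:ℝ) < 2 * x)]
  field_simp


lemma phi_hasDeriv {b : ℝ} : ∀ x ∈ Ioi (0:ℝ),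
    HasDerivWithinAt (fun x : ℝ => b / (1 + x ^ 2))
      (b * (-(2 * x) / (1 + x ^ 2) ^ 2)) (Ioi (0:ℝ)) x := by
  intro x _
  have hu : (0:ℝ) < 1 + x ^ 2 := by positivity
  have h1 : HasDerivAt (fun x : ℝ => 1 + x ^ 2) (2 * x) x := by
    simpa using ((hasDerivAt_pow 2 x).const_add 1)
  have h2 : HasDerivAt (fun x : ℝ => b * (1 + x ^ 2)⁻¹) (b * (-(2 * x) / (1 + x ^ 2) ^ 2)) x :=
    (h1.inv hu.ne').const_mul b
  have h3 : (fun x : ℝ => b * (1 + x ^ 2)⁻¹) = fun x : ℝ => b / (1 + x ^ 2) := by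
    funext y; rw [div_eq_mul_inv]
  rw [h3] at h2
  exact h2.hasDerivWithinAt

lemma phi_injOn {b : ℝ} (hb : 0 < b) :
    InjOn (fun x : ℝ => b / (1 + x ^ 2)) (Ioi (0:ℝ)) := by
  intro p hp q hq h
  simp only [mem_Ioi] at hp hq
  simp only at h
  have h1 : (0:ℝ) < 1 + p ^ 2 := by positivity
  have h2 : (0:ℝ) < 1 + q ^ 2 := by positivity
  rw [div_eq_div_iff h1.ne' h2.ne'] at h
  have h4 := mul_left_cancel₀ hb.ne' h
  nlinarith [sq_nonneg (p - q), sq_nonneg (p + q)]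

lemma phi_image {b : ℝ} (hb : 0 < b) :
    (fun x : ℝ => b / (1 + x ^ 2)) '' Ioi (0:ℝ) = Ioo 0 b := by
  ext y
  constructor
  · rintro ⟨x, hx, rfl⟩
    simp only [mem_Ioi] at hx
    have hu : (0:ℝ) < 1 + x ^ 2 := by positivity
    exact ⟨div_pos hb hu, div_lt_self hb (by nlinarith)⟩
  · rintro ⟨hy1, hy2⟩
    refine ⟨Real.sqrt ((b - y) / y), Real.sqrt_pos.2 (div_pos (by linarith) hy1), ?_⟩
    have hsq : Real.sqrt ((b - y) / y) ^ 2 = (b - y) / y :=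
      Real.sq_sqrt (le_of_lt (div_pos (by linarith) hy1))
    simp only [hsq]
    rw [div_eq_iff]
    · field_simp; ring
    · have h0 : (0:ℝ) < (b - y) / y := div_pos (by linarith) hy1
      have : (0:ℝ) < 1 + (b - y) / y := by linarith
      exact this.ne'

lemma J_point {b : ℝ} (hb : 0 < b) {x : ℝ} (hx : 0 < x) :
    |b * (-(2 * x) / (1 + x ^ 2) ^ 2)| •
        (Real.sqrt (max (b - b / (1 + x ^ 2)) 0 / b) /
          (Real.sqrt (b / (1 + x ^ 2)) * (1 + b / (1 + x ^ 2))))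
      = 2 * Real.sqrt b * (x ^ 2 / ((1 + b + x ^ 2) * (1 + x ^ 2))) := by
  have hu : (0:ℝ) < 1 + x ^ 2 := by positivity
  have hA : b - b / (1 + x ^ 2) = b * x ^ 2 / (1 + x ^ 2) := by field_simp; ring
  have hC : b * x ^ 2 / (1 + x ^ 2) / b = x ^ 2 / (1 + x ^ 2) := by
    field_simp
  rw [hA, max_eq_left (by positivity), hC,
    Real.sqrt_div (sq_nonneg x), Real.sqrt_sq hx.le, Real.sqrt_div hb.le]
  have habs : |b * (-(2 * x) / (1 + x ^ 2) ^ 2)| = b * (2 * x) / (1 + x ^ 2) ^ 2 := by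
    rw [abs_of_neg (mul_neg_of_pos_of_neg hb (div_neg_of_neg_of_pos (by linarith) (by positivity)))]
    ring
  rw [smul_eq_mul, habs]
  have hsu : 0 < Real.sqrt (1 + x ^ 2) := Real.sqrt_pos.2 hu
  have hsb : 0 < Real.sqrt b := Real.sqrt_pos.2 hb
  have h2 : Real.sqrt (1 + x ^ 2) ^ 2 = 1 + x ^ 2 := Real.sq_sqrt hu.le
  have h3 : Real.sqrt b ^ 2 = b := Real.sq_sqrt hb.le
  set s := Real.sqrt (1 + x ^ 2) with hs
  set t := Real.sqrt b with ht
  rw [← h3, ← h2]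
  have h5 : (0:ℝ) < 1 + t ^ 2 + x ^ 2 := by positivity
  field_simp
  linear_combination (-1 : ℝ) * h2

lemma one_lt_sqrt_one_add {b : ℝ} (hb : 0 < b) : 1 < Real.sqrt (1 + b) := by
  exact (Real.lt_sqrt (by norm_num)).2 (by nlinarith)

lemma sq_sqrt_one_add {b : ℝ} (hb : 0 < b) : Real.sqrt (1 + b) ^ 2 = 1 + b :=
  Real.sq_sqrt (by linarith)

lemma J_vanish {b : ℝ} (hb : 0 < b) {y : ℝ} (hy : b ≤ y) :
    Real.sqrt (max (b - y) 0 / b) / (Real.sqrt y * (1 + y)) = 0 := by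
  rw [max_eq_right (by linarith), zero_div, Real.sqrt_zero, zero_div]

lemma J_restrict {b : ℝ} (hb : 0 < b) :
    (∫ y in Ioi (0:ℝ), Real.sqrt (max (b - y) 0 / b) / (Real.sqrt y * (1 + y)))
      = ∫ y in Ioo (0:ℝ) b, Real.sqrt (max (b - y) 0 / b) / (Real.sqrt y * (1 + y)) := by
  rw [show Ioo (0:ℝ) b = Ioi 0 ∩ Ioo 0 b from
      (inter_eq_self_of_subset_right Ioo_subset_Ioi_self).symm,
    ← setIntegral_indicator measurableSet_Ioo]
  refine setIntegral_congr_fun measurableSet_Ioi fun y hy => ?_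
  simp only [mem_Ioi] at hy
  by_cases hyb : y < b
  · rw [indicator_of_mem (by exact ⟨hy, hyb⟩)]
  · rw [indicator_of_notMem (by simp [hyb]), J_vanish hb (not_lt.1 hyb)]

lemma J_subst {b : ℝ} (hb : 0 < b) :
    (∫ y in Ioo (0:ℝ) b, Real.sqrt (max (b - y) 0 / b) / (Real.sqrt y * (1 + y)))
      = ∫ x in Ioi (0:ℝ), 2 * Real.sqrt b * (x ^ 2 / ((1 + b + x ^ 2) * (1 + x ^ 2))) := by
  have h := integral_image_eq_integral_abs_deriv_smul measurableSet_Ioi (phi_hasDeriv (b := b))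
    (phi_injOn hb) (fun y => Real.sqrt (max (b - y) 0 / b) / (Real.sqrt y * (1 + y)))
  rw [phi_image hb] at h
  rw [h]
  exact setIntegral_congr_fun measurableSet_Ioi fun x hx => J_point hb hx

lemma J_val {b : ℝ} (hb : 0 < b) :
    (∫ y in Ioi (0:ℝ), Real.sqrt (max (b - y) 0 / b) / (Real.sqrt y * (1 + y)))
      = π * (Real.sqrt (1 + b) - 1) / Real.sqrt b := by
  rw [J_restrict hb, J_subst hb, MeasureTheory.integral_const_mul]
  have hc := one_lt_sqrt_one_add hb
  have hc2 := sq_sqrt_one_add hb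
  rw [show (1:ℝ) + b = Real.sqrt (1 + b) ^ 2 from hc2.symm, integral_ratfn hc]
  set c := Real.sqrt (1 + b)
  have hsb : 0 < Real.sqrt b := Real.sqrt_pos.2 hb
  have h3 : Real.sqrt b ^ 2 = b := Real.sq_sqrt hb.le
  have hc1 : (0:ℝ) < c + 1 := by linarith
  field_simp
  rw [Real.sqrt_sq (by linarith : (0:ℝ) ≤ c)]
  linear_combination h3 - hc2

lemma J_integrable {b : ℝ} (hb : 0 < b) :
    IntegrableOn (fun y => Real.sqrt (max (b - y) 0 / b) / (Real.sqrt y * (1 + y)))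
      (Ioi (0:ℝ)) := by
  have hc := one_lt_sqrt_one_add hb
  have hc2 := sq_sqrt_one_add hb
  have hIoo : IntegrableOn
      (fun y => Real.sqrt (max (b - y) 0 / b) / (Real.sqrt y * (1 + y))) (Ioo (0:ℝ) b) := by
    have h := integrableOn_image_iff_integrableOn_abs_deriv_smul measurableSet_Ioi
      (phi_hasDeriv (b := b)) (phi_injOn hb)
      (fun y => Real.sqrt (max (b - y) 0 / b) / (Real.sqrt y * (1 + y)))
    rw [phi_image hb] at h
    rw [h]
    have hint : Integrable (fun x : ℝ => 2 * Real.sqrt b *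
        (x ^ 2 / ((1 + b + x ^ 2) * (1 + x ^ 2)))) := by
      have := (integrable_ratfn hc).const_mul (2 * Real.sqrt b)
      rw [hc2] at this
      exact this
    exact hint.integrableOn.congr_fun (fun x hx => (J_point hb hx).symm) measurableSet_Ioi
  have hIci : IntegrableOn
      (fun y => Real.sqrt (max (b - y) 0 / b) / (Real.sqrt y * (1 + y))) (Ici b) := by
    refine (integrableOn_zero (ε' := ℝ)).congr_fun (fun y hy => ?_) measurableSet_Ici
    exact (J_vanish hb hy).symm
  exact (hIoo.union hIci).mono_set (fun y hy => by
    rcases lt_or_ge y b with h | h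
    · exact Or.inl ⟨hy, h⟩
    · exact Or.inr h)


/-- Evaluation of the first-moment integral for the length of the Brownian
annulus: for every `b > 0`,
`√(3/(2π)) ∫₀^∞ (1 - √((b-y)⁺/b)) / (√y (1+y)) dy
  = √(3π/2) (1 - (√(1+b) - 1)/√b)`. -/
theorem annulus_length_integral (b : ℝ) (hb : 0 < b) :
    Real.sqrt (3 / (2 * Real.pi)) *
        ∫ y in Set.Ioi (0 : ℝ),
          (1 - Real.sqrt (max (b - y) 0 / b)) / (Real.sqrt y * (1 + y))
      = Real.sqrt (3 * Real.pi / 2) *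
          (1 - (Real.sqrt (1 + b) - 1) / Real.sqrt b) := by
  have hT : (∫ y in Ioi (0:ℝ),
        (1 - Real.sqrt (max (b - y) 0 / b)) / (Real.sqrt y * (1 + y)))
      = (∫ y in Ioi (0:ℝ), 1 / (Real.sqrt y * (1 + y)))
        - ∫ y in Ioi (0:ℝ), Real.sqrt (max (b - y) 0 / b) / (Real.sqrt y * (1 + y)) := by
    rw [← integral_sub I_integrable (J_integrable hb)]
    exact setIntegral_congr_fun measurableSet_Ioi fun y _ => by rw [sub_div]
  rw [hT, I_val, J_val hb]
  have key : Real.sqrt (3 / (2 * π)) * π = Real.sqrt (3 * π / 2) := by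
    have h1 : (3:ℝ) / (2 * π) * π ^ 2 = 3 * π / 2 := by
      field_simp
    calc Real.sqrt (3 / (2 * π)) * π
        = Real.sqrt (3 / (2 * π)) * Real.sqrt (π ^ 2) := by
          rw [Real.sqrt_sq Real.pi_pos.le]
      _ = Real.sqrt (3 / (2 * π) * π ^ 2) := (Real.sqrt_mul (by positivity) _).symm
      _ = Real.sqrt (3 * π / 2) := by rw [h1]
  linear_combination (1 - (Real.sqrt (1 + b) - 1) / Real.sqrt b) * key
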